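/- Let f ∈ Diff¹_ω(D) have finite order, i.e. f^p = id for some integer p ≥ 1. Then Cal₁(f) = 0; that is, ∫_D A dLeb = 0 for every normalized action function A of f. -/

import Mathlib

open MeasureTheory Metric Set Filter Topology
open scoped Real

noncomputable section

/-- The closed unit disk in `ℂ ≅ ℝ²`. -/
def Disk : Set ℂ := Metric.closedBall 0 1

/-- The unit circle, boundary of the closed unit disk. -/
def Circ : Set ℂ := Metric.sphere 0 1

/-- The standard Liouville form `λ_z(w) = (z₁ w₂ - z₂ w₁)/(2π)`, whose exterior
derivative is the normalized area form `ω = (1/π) du ∧ dv`. -/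
def lform (z w : ℂ) : ℝ := (z.re * w.im - z.im * w.re) / (2 * Real.pi)

/-- An element of `Diff¹_ω(D)`: a `C¹` diffeomorphism of the closed unit disk onto itself
whose Jacobian determinant equals `1` at every point. -/
structure SympDiff where
  toFun : ℂ → ℂ
  invFun : ℂ → ℂ
  mapsTo : Set.MapsTo toFun Disk Disk
  inv_mapsTo : Set.MapsTo invFun Disk Disk
  left_inv : ∀ z ∈ Disk, invFun (toFun z) = z
  right_inv : ∀ z ∈ Disk, toFun (invFun z) = z
  contDiffOn : ContDiffOn ℝ 1 toFun Disk
  inv_contDiffOn : ContDiffOn ℝ 1 invFun Disk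
  jacobian : ∀ z ∈ Disk,
    LinearMap.det (fderivWithin ℝ toFun Disk z).toLinearMap = 1

/-- `A` is an action function of `f`: a `C¹` function with `dA = f*λ - λ` on the disk. -/
def IsAction (f : SympDiff) (A : ℂ → ℝ) : Prop :=
  ContDiffOn ℝ 1 A Disk ∧
    ∀ z ∈ Disk, ∀ w : ℂ,
      fderivWithin ℝ A Disk z w =
        lform (f.toFun z) (fderivWithin ℝ f.toFun Disk z w) - lform z w

/-- `μ` is a Borel probability measure concentrated on the unit circle and invariant
under `f|_{S¹}`. -/
def IsInvariantCircleMeasure (f : SympDiff) (μ : Measure ℂ) : Prop :=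
  IsProbabilityMeasure μ ∧ μ Circᶜ = 0 ∧ Measure.map f.toFun μ = μ

/-- `A` is a normalized action function of `f`: an action function whose integral over the
circle with respect to some `f|_{S¹}`-invariant probability measure vanishes. -/
def IsNormalizedAction (f : SympDiff) (A : ℂ → ℝ) : Prop :=
  IsAction f A ∧
    ∃ μ : Measure ℂ, IsInvariantCircleMeasure f μ ∧ ∫ z, A z ∂μ = 0

/-- The `C⁰` distance between two disk diffeomorphisms (given with their inverses). -/
def d0 (f fi g gi : ℂ → ℂ) : ℝ :=
  max (⨆ z : Disk, ‖f (z : ℂ) - g (z : ℂ)‖) (⨆ z : Disk, ‖fi (z : ℂ) - gi (z : ℂ)‖)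

/-- The `C¹` distance between two disk diffeomorphisms (given with their inverses). -/
def d1 (f fi g gi : ℂ → ℂ) : ℝ :=
  max (d0 f fi g gi)
    (max (⨆ z : Disk, ‖fderivWithin ℝ f Disk (z : ℂ) - fderivWithin ℝ g Disk (z : ℂ)‖)
      (⨆ z : Disk, ‖fderivWithin ℝ fi Disk (z : ℂ) - fderivWithin ℝ gi Disk (z : ℂ)‖))

/-! ### Auxiliary material for the proof -/

lemma disk_closed : IsClosed Disk := Metric.isClosed_closedBall

lemma disk_compact : IsCompact Disk := isCompact_closedBall 0 1

lemma disk_meas : MeasurableSet Disk := measurableSet_closedBall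

lemma circ_subset_disk : Circ ⊆ Disk := sphere_subset_closedBall

lemma disk_convex : Convex ℝ Disk := convex_closedBall 0 1

lemma zero_mem_disk : (0 : ℂ) ∈ Disk := mem_closedBall_self zero_le_one

lemma disk_uniqueDiff : UniqueDiffOn ℝ Disk := by
  refine uniqueDiffOn_convex disk_convex ?_
  rw [Disk, interior_closedBall (0 : ℂ) one_ne_zero]
  exact ⟨0, by simp⟩

/-- Candidate derivative of the `k`-th iterate of `f` within the disk. -/
def DFit (f : SympDiff) : ℕ → ℂ → (ℂ →L[ℝ] ℂ)
  | 0, _ => ContinuousLinearMap.id ℝ ℂ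
  | (k + 1), z => (fderivWithin ℝ f.toFun Disk (f.toFun^[k] z)).comp (DFit f k z)

/-- The Calabi invariant of a finite order element of `Diff¹_ω(D)`
vanishes. -/
theorem cal_finite_order (f : SympDiff) (p : ℕ) (hp : 1 ≤ p)
    (hper : ∀ z ∈ Disk, f.toFun^[p] z = z)
    (A : ℂ → ℝ) (hA : IsNormalizedAction f A) :
    ∫ z in Disk, A z = 0 := by
  obtain ⟨⟨hA1, hA2⟩, μ, ⟨hμprob, hμcirc, hμmap⟩, hμint⟩ := hA
  haveI := hμprob
  -- basic facts
  have hmapsk : ∀ k : ℕ, MapsTo (f.toFun^[k]) Disk Disk := fun k => f.mapsTo.iterate k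
  have hfd : ∀ z ∈ Disk, HasFDerivWithinAt f.toFun (fderivWithin ℝ f.toFun Disk z) Disk z :=
    fun z hz => (f.contDiffOn.differentiableOn one_ne_zero z hz).hasFDerivWithinAt
  have hAd : ∀ z ∈ Disk, HasFDerivWithinAt A (fderivWithin ℝ A Disk z) Disk z :=
    fun z hz => (hA1.differentiableOn one_ne_zero z hz).hasFDerivWithinAt
  have hDF : ∀ k, ∀ z ∈ Disk, HasFDerivWithinAt (f.toFun^[k]) (DFit f k z) Disk z := by
    intro k
    induction k with
    | zero => intro z hz; simpa [DFit] using hasFDerivWithinAt_id z Disk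
    | succ k ih =>
      intro z hz
      rw [Function.iterate_succ']
      exact (hfd _ (hmapsk k hz)).comp z (ih z hz) (hmapsk k)
  -- the summed action function
  set S : ℂ → ℝ := fun z => ∑ k ∈ Finset.range p, A (f.toFun^[k] z) with hSdef
  have hSder : ∀ z ∈ Disk, HasFDerivWithinAt S
      (∑ k ∈ Finset.range p,
        (fderivWithin ℝ A Disk (f.toFun^[k] z)).comp (DFit f k z)) Disk z := by
    intro z hz
    exact HasFDerivWithinAt.fun_sum fun k _ =>
      (hAd _ (hmapsk k hz)).comp z (hDF k z hz) (hmapsk k)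
  have hDFp : ∀ z ∈ Disk, DFit f p z = ContinuousLinearMap.id ℝ ℂ := by
    intro z hz
    have h1 : HasFDerivWithinAt (f.toFun^[p]) (DFit f p z) Disk z := hDF p z hz
    have h2 : HasFDerivWithinAt (f.toFun^[p]) (ContinuousLinearMap.id ℝ ℂ) Disk z :=
      (hasFDerivWithinAt_id z Disk).congr (fun y hy => hper y hy) (hper z hz)
    exact (disk_uniqueDiff z hz).eq h1 h2
  have hSzero : ∀ z ∈ Disk, fderivWithin ℝ S Disk z = 0 := by
    intro z hz
    have hT : (∑ k ∈ Finset.range p,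
        (fderivWithin ℝ A Disk (f.toFun^[k] z)).comp (DFit f k z)) = 0 := by
      ext w
      have hterm : ∀ k, ((fderivWithin ℝ A Disk (f.toFun^[k] z)).comp (DFit f k z)) w
          = lform (f.toFun^[k + 1] z) (DFit f (k + 1) z w)
            - lform (f.toFun^[k] z) (DFit f k z w) := by
        intro k
        have h := hA2 _ (hmapsk k hz) (DFit f k z w)
        simp only [ContinuousLinearMap.comp_apply]
        rw [h, Function.iterate_succ_apply']
        rfl
      simp only [ContinuousLinearMap.sum_apply, ContinuousLinearMap.zero_apply]
      rw [Finset.sum_congr rfl (fun k _ => hterm k),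
        Finset.sum_range_sub (fun k => lform (f.toFun^[k] z) (DFit f k z w))]
      simp [hper z hz, hDFp z hz, DFit]
    rw [(hSder z hz).fderivWithin (disk_uniqueDiff z hz), hT]
  have hSdiff : DifferentiableOn ℝ S Disk :=
    fun z hz => (hSder z hz).differentiableWithinAt
  have hconst : ∀ z ∈ Disk, S z = S 0 := fun z hz =>
    disk_convex.is_const_of_fderivWithin_eq_zero hSdiff hSzero hz zero_mem_disk
  -- continuous extensions of `A` and `f` to all of `ℂ`
  obtain ⟨Ae, hAe⟩ := ContinuousMap.exists_restrict_eq (Y := ℝ) disk_closed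
    ⟨Disk.restrict A, hA1.continuousOn.restrict⟩
  obtain ⟨fe, hfe⟩ := ContinuousMap.exists_restrict_eq (Y := ℂ) disk_closed
    ⟨Disk.restrict f.toFun, f.contDiffOn.continuousOn.restrict⟩
  have hAe' : ∀ z ∈ Disk, Ae z = A z := fun z hz => ContinuousMap.congr_fun hAe ⟨z, hz⟩
  have hfe' : ∀ z ∈ Disk, fe z = f.toFun z := fun z hz => ContinuousMap.congr_fun hfe ⟨z, hz⟩
  have hiter : ∀ k, ∀ z ∈ Disk, (⇑fe)^[k] z = f.toFun^[k] z := by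
    intro k
    induction k with
    | zero => intro z hz; simp
    | succ k ih =>
      intro z hz
      rw [Function.iterate_succ_apply', Function.iterate_succ_apply', ih z hz,
        hfe' _ (hmapsk k hz)]
  -- the measure `μ` is concentrated on the circle
  have hae : ∀ᵐ z ∂μ, z ∈ Circ := by
    rw [ae_iff]
    simpa [compl_def] using hμcirc
  have haeD : ∀ᵐ z ∂μ, z ∈ Disk := hae.mono fun z hz => circ_subset_disk hz
  have hfμ : AEMeasurable f.toFun μ :=
    fe.continuous.measurable.aemeasurable.congr (haeD.mono fun z hz => hfe' z hz)
  have hkey : ∀ g : ℂ → ℝ, Continuous g → ∫ z, g (f.toFun z) ∂μ = ∫ z, g z ∂μ := by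
    intro g hg
    have h := integral_map (φ := f.toFun) hfμ hg.aestronglyMeasurable
    rw [hμmap] at h
    exact h.symm
  have hμiter : ∀ k, ∫ z, Ae ((⇑fe)^[k] z) ∂μ = ∫ z, Ae z ∂μ := by
    intro k
    induction k with
    | zero => simp
    | succ k ih =>
      have hg : Continuous fun z => Ae ((⇑fe)^[k] z) :=
        Ae.continuous.comp (fe.continuous.iterate k)
      calc ∫ z, Ae ((⇑fe)^[k + 1] z) ∂μ
          = ∫ z, Ae ((⇑fe)^[k] (fe z)) ∂μ := by
            simp only [Function.iterate_succ_apply]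
        _ = ∫ z, Ae ((⇑fe)^[k] (f.toFun z)) ∂μ :=
            integral_congr_ae (haeD.mono fun z hz => by simp only [hfe' z hz])
        _ = ∫ z, Ae ((⇑fe)^[k] z) ∂μ := hkey _ hg
        _ = ∫ z, Ae z ∂μ := ih
  have hμres : μ.restrict Circ = μ := Measure.restrict_eq_self_of_ae_mem hae
  have hintc : ∀ g : ℂ → ℝ, Continuous g → Integrable g μ := by
    intro g hg
    rw [← hμres]
    exact hg.continuousOn.integrableOn_compact (isCompact_sphere 0 1)
  have hAeint : ∫ z, Ae z ∂μ = 0 := by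
    rw [integral_congr_ae (haeD.mono fun z hz => hAe' z hz)]
    exact hμint
  -- the constant value of `S` is zero
  have hS00 : S 0 = 0 := by
    have h1 : ∫ z, S z ∂μ = S 0 := by
      rw [integral_congr_ae (g := fun _ => S 0) (haeD.mono fun z hz => hconst z hz),
        integral_const]
      simp
    have h2 : ∫ z, S z ∂μ = 0 := by
      have hSe : S =ᵐ[μ] fun z => ∑ k ∈ Finset.range p, Ae ((⇑fe)^[k] z) := by
        refine haeD.mono fun z hz => ?_
        exact Finset.sum_congr rfl fun k _ => by
          rw [hiter k z hz, hAe' _ (hmapsk k hz)]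
      rw [integral_congr_ae hSe,
        integral_finset_sum (f := fun k z => Ae ((⇑fe)^[k] z)) _ (fun k _ =>
          hintc (fun z => Ae ((⇑fe)^[k] z)) (Ae.continuous.comp (fe.continuous.iterate k)))]
      rw [Finset.sum_congr rfl fun k _ => hμiter k, Finset.sum_const, hAeint]
      simp
    rw [← h1, h2]
  have hS0 : ∀ z ∈ Disk, S z = 0 := fun z hz => (hconst z hz).trans hS00
  -- change of variables: `f` preserves the Lebesgue integral over the disk
  have himg : f.toFun '' Disk = Disk := by
    refine Subset.antisymm (f.mapsTo.image_subset) fun z hz => ?_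
    exact ⟨f.invFun z, f.inv_mapsTo hz, f.right_inv z hz⟩
  have hinj : InjOn f.toFun Disk := by
    intro a ha b hb hab
    calc a = f.invFun (f.toFun a) := (f.left_inv a ha).symm
      _ = f.invFun (f.toFun b) := by rw [hab]
      _ = b := f.left_inv b hb
  have hcov : ∀ g : ℂ → ℝ, ∫ z in Disk, g (f.toFun z) = ∫ z in Disk, g z := by
    intro g
    have h := integral_image_eq_integral_abs_det_fderiv_smul (μ := volume) disk_meas hfd hinj g
    rw [himg] at h
    rw [h]
    refine setIntegral_congr_fun disk_meas fun z hz => ?_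
    have hdet : (fderivWithin ℝ f.toFun Disk z).det = 1 := f.jacobian z hz
    simp [hdet]
  have hcovk : ∀ k, ∫ z in Disk, A (f.toFun^[k] z) = ∫ z in Disk, A z := by
    intro k
    induction k with
    | zero => simp
    | succ k ih =>
      calc ∫ z in Disk, A (f.toFun^[k + 1] z)
          = ∫ z in Disk, A (f.toFun^[k] (f.toFun z)) := by
            simp only [Function.iterate_succ_apply]
        _ = ∫ z in Disk, A (f.toFun^[k] z) := hcov fun y => A (f.toFun^[k] y)
        _ = ∫ z in Disk, A z := ih
  -- put everything together
  have hfin : ∫ z in Disk, S z = p * ∫ z in Disk, A z := by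
    calc ∫ z in Disk, S z
        = ∫ z in Disk, ∑ k ∈ Finset.range p, Ae ((⇑fe)^[k] z) :=
          setIntegral_congr_fun disk_meas fun z hz =>
            Finset.sum_congr rfl fun k _ => by rw [hiter k z hz, hAe' _ (hmapsk k hz)]
      _ = ∑ k ∈ Finset.range p, ∫ z in Disk, Ae ((⇑fe)^[k] z) :=
          integral_finset_sum (f := fun k z => Ae ((⇑fe)^[k] z)) _ fun k _ =>
            ContinuousOn.integrableOn_compact disk_compact
              (Continuous.continuousOn (Ae.continuous.comp (fe.continuous.iterate k)))
      _ = ∑ k ∈ Finset.range p, ∫ z in Disk, A (f.toFun^[k] z) :=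
          Finset.sum_congr rfl fun k _ =>
            (setIntegral_congr_fun disk_meas fun z hz => by
              rw [hiter k z hz, hAe' _ (hmapsk k hz)]).symm
      _ = ∑ k ∈ Finset.range p, ∫ z in Disk, A z :=
          Finset.sum_congr rfl fun k _ => hcovk k
      _ = p * ∫ z in Disk, A z := by
          rw [Finset.sum_const, Finset.card_range, nsmul_eq_mul]
  have hSvan : ∫ z in Disk, S z = 0 := by
    rw [setIntegral_congr_fun (g := fun _ => (0 : ℝ)) disk_meas fun z hz => hS0 z hz]
    simp
  have hppos : (0 : ℝ) < p := by exact_mod_cast hp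
  have := hfin.symm.trans hSvan
  exact (mul_eq_zero.mp this).resolve_left (ne_of_gt hppos)
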